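/- arXiv:math/0606185 — 2 statements merged into one kernel-verified Lean document; each statement's English description precedes it below -/
import Mathlib

section
/- For all z > 0 and ν > 0, the modified Bessel function of the first kind satisfies I_ν(z) ≤ c z^{-1/2} e^z for some constant c > 0 independent of ν and z. -/
open Real MeasureTheory Set

lemma aux_int (a z : ℝ) (ha : -(1:ℝ)/2 < a) (hz : 0 < z) :
    ∫ u in (-1:ℝ)..1, (1 - u ^ 2) ^ a * Real.exp (-z * u) ≤
      2 ^ (max a 0 + 1) * Real.exp z * ((1 / z) ^ (a + 1) * Real.Gamma (a + 1)) := by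
  have ha1 : (-1:ℝ) < a := by linarith
  set F : ℝ → ℝ := fun s => s ^ a * Real.exp (-z * s) with hF
  -- integrability of F on Ioi 0
  have hFint : IntegrableOn F (Ioi 0) := by
    have := integrableOn_rpow_mul_exp_neg_mul_rpow ha1 (zero_lt_one : (0:ℝ) < 1) hz
    simpa [hF] using this
  have hFval : ∫ s in Ioi (0:ℝ), F s = (1 / z) ^ (a + 1) * Real.Gamma (a + 1) := by
    have := Real.integral_rpow_mul_exp_neg_mul_Ioi (by linarith : 0 < a + 1) hz
    simpa [hF] using this
  have hFnonneg : ∀ s : ℝ, 0 ≤ F s ∨ True := fun s => Or.inr trivial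
  have hF02 : IntervalIntegrable F volume 0 2 := by
    rw [intervalIntegrable_iff_integrableOn_Ioc_of_le (by norm_num : (0:ℝ) ≤ 2)]
    exact hFint.mono_set Ioc_subset_Ioi_self
  -- g and h
  set g : ℝ → ℝ := fun u => (1 + u) ^ a * Real.exp (-z * u) with hgdef
  set h : ℝ → ℝ := fun u => (1 - u) ^ a * Real.exp (z * u) with hhdef
  have hg_eq : ∀ u : ℝ, g u = Real.exp z * F (u + 1) := by
    intro u
    simp only [hgdef, hF]
    rw [show (1:ℝ) + u = u + 1 from by ring,
      show Real.exp z * ((u+1) ^ a * Real.exp (-z * (u+1)))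
        = (u+1) ^ a * (Real.exp z * Real.exp (-z * (u+1))) from by ring, ← Real.exp_add]
    congr 1
    ring
  have hh_eq : ∀ u : ℝ, h u = Real.exp z * F (1 - u) := by
    intro u
    simp only [hhdef, hF]
    rw [show Real.exp z * ((1-u) ^ a * Real.exp (-z * (1-u)))
        = (1-u) ^ a * (Real.exp z * Real.exp (-z * (1-u))) from by ring, ← Real.exp_add]
    congr 1
    ring
  have hgint : IntervalIntegrable g volume (-1) 1 := by
    have h1 : IntervalIntegrable (fun x => F (x + 1)) volume (0 - 1) (2 - 1) :=
      hF02.comp_add_right 1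
    norm_num at h1
    have h2 := h1.const_mul (Real.exp z)
    refine h2.congr ?_
    intro u _
    exact (hg_eq u).symm
  have hhint : IntervalIntegrable h volume (-1) 1 := by
    have h1 : IntervalIntegrable (fun x => F (1 - x)) volume (1 - 0) (1 - 2) :=
      hF02.comp_sub_left 1
    norm_num at h1
    have h2 := h1.symm
    have := h2.const_mul (Real.exp z)
    refine this.congr ?_
    intro u _
    exact (hh_eq u).symm
  -- value bound for ∫ g
  have hgval : ∫ u in (-1:ℝ)..1, g u ≤ Real.exp z * ((1 / z) ^ (a + 1) * Real.Gamma (a + 1)) := by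
    have e1 : ∫ u in (-1:ℝ)..1, g u = Real.exp z * ∫ u in (-1:ℝ)..1, F (u + 1) := by
      rw [← intervalIntegral.integral_const_mul]
      exact intervalIntegral.integral_congr fun u _ => hg_eq u
    have e2 : ∫ u in (-1:ℝ)..1, F (u + 1) = ∫ s in (0:ℝ)..2, F s := by
      rw [intervalIntegral.integral_comp_add_right F 1]; norm_num
    have e3 : ∫ s in (0:ℝ)..2, F s ≤ ∫ s in Ioi (0:ℝ), F s := by
      rw [intervalIntegral.integral_of_le (by norm_num : (0:ℝ) ≤ 2)]
      refine setIntegral_mono_set hFint ?_ (HasSubset.Subset.eventuallyLE Ioc_subset_Ioi_self)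
      filter_upwards [self_mem_ae_restrict measurableSet_Ioi] with s hs
      exact mul_nonneg (Real.rpow_nonneg (le_of_lt hs) a) (Real.exp_pos _).le
    rw [e1, e2, ← hFval]
    exact mul_le_mul_of_nonneg_left e3 (Real.exp_pos z).le
  -- reflection: ∫ h = ∫ g
  have hrefl : ∫ u in (-1:ℝ)..1, h u = ∫ u in (-1:ℝ)..1, g u := by
    have e := intervalIntegral.integral_comp_neg (a := (-1:ℝ)) (b := 1) g
    simp only [neg_neg] at e
    rw [← e]
    refine intervalIntegral.integral_congr fun u _ => ?_
    simp only [hgdef, hhdef]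
    ring_nf
  -- pointwise bound
  set M : ℝ → ℝ := fun u => 2 ^ (max a 0) * (g u + h u) with hMdef
  have hMbd : ∀ u ∈ Icc (-1:ℝ) 1, (1 - u ^ 2) ^ a * Real.exp (-z * u) ≤ M u := by
    rintro u ⟨hu1, hu2⟩
    have h1p : (0:ℝ) ≤ 1 + u := by linarith
    have h1m : (0:ℝ) ≤ 1 - u := by linarith
    have hgnn : 0 ≤ (1 + u) ^ a := Real.rpow_nonneg h1p a
    have hhnn : 0 ≤ (1 - u) ^ a := Real.rpow_nonneg h1m a
    have hgt : 0 ≤ (1 + u) ^ a * Real.exp (-z * u) :=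
      mul_nonneg hgnn (Real.exp_pos _).le
    have hht : 0 ≤ (1 - u) ^ a * Real.exp (z * u) :=
      mul_nonneg hhnn (Real.exp_pos _).le
    have key : ((1:ℝ) - u ^ 2) = (1 + u) * (1 - u) := by ring
    rw [key, Real.mul_rpow h1p h1m]
    simp only [hMdef, hgdef, hhdef]
    rcases le_or_gt 0 a with hA | hA
    · rw [max_eq_left hA]
      have h2a : 0 ≤ (2:ℝ) ^ a := Real.rpow_nonneg (by norm_num) a
      have hle : (1 - u) ^ a ≤ 2 ^ a :=
        Real.rpow_le_rpow h1m (by linarith) hA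
      calc (1 + u) ^ a * (1 - u) ^ a * Real.exp (-z * u)
          ≤ (1 + u) ^ a * 2 ^ a * Real.exp (-z * u) := by
            apply mul_le_mul_of_nonneg_right _ (Real.exp_pos _).le
            exact mul_le_mul_of_nonneg_left hle hgnn
        _ = 2 ^ a * ((1 + u) ^ a * Real.exp (-z * u)) := by ring
        _ ≤ 2 ^ a * ((1 + u) ^ a * Real.exp (-z * u) + (1 - u) ^ a * Real.exp (z * u)) := by
            apply mul_le_mul_of_nonneg_left _ h2a
            linarith
    · rw [max_eq_right hA.le, Real.rpow_zero, one_mul]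
      rcases le_or_gt u 0 with hu0 | hu0
      · have hle : (1 - u) ^ a ≤ 1 :=
          Real.rpow_le_one_of_one_le_of_nonpos (by linarith) hA.le
        have : (1 + u) ^ a * (1 - u) ^ a * Real.exp (-z * u)
            ≤ (1 + u) ^ a * Real.exp (-z * u) := by
          have h3 : (1 + u) ^ a * (1 - u) ^ a ≤ (1 + u) ^ a * 1 :=
            mul_le_mul_of_nonneg_left hle hgnn
          rw [mul_one] at h3
          exact mul_le_mul_of_nonneg_right h3 (Real.exp_pos _).le
        linarith
      · have hle : (1 + u) ^ a ≤ 1 :=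
          Real.rpow_le_one_of_one_le_of_nonpos (by linarith) hA.le
        have hexple : Real.exp (-z * u) ≤ Real.exp (z * u) :=
          Real.exp_le_exp.mpr (by nlinarith)
        have : (1 + u) ^ a * (1 - u) ^ a * Real.exp (-z * u)
            ≤ (1 - u) ^ a * Real.exp (z * u) := by
          calc (1 + u) ^ a * (1 - u) ^ a * Real.exp (-z * u)
              ≤ 1 * (1 - u) ^ a * Real.exp (-z * u) := by
                apply mul_le_mul_of_nonneg_right _ (Real.exp_pos _).le
                exact mul_le_mul_of_nonneg_right hle hhnn
            _ = (1 - u) ^ a * Real.exp (-z * u) := by ring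
            _ ≤ (1 - u) ^ a * Real.exp (z * u) :=
                mul_le_mul_of_nonneg_left hexple hhnn
        linarith
  -- integrability of M and of the main integrand
  have hMint : IntervalIntegrable M volume (-1) 1 := (hgint.add hhint).const_mul _
  have hf0meas : Measurable fun u : ℝ => (1 - u ^ 2) ^ a * Real.exp (-z * u) := by
    fun_prop
  have hf0int : IntervalIntegrable (fun u => (1 - u ^ 2) ^ a * Real.exp (-z * u))
      volume (-1) 1 := by
    rw [intervalIntegrable_iff_integrableOn_Ioc_of_le (by norm_num : (-1:ℝ) ≤ 1)]
    have hMint' : IntegrableOn M (Ioc (-1:ℝ) 1) := by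
      rw [← intervalIntegrable_iff_integrableOn_Ioc_of_le (by norm_num : (-1:ℝ) ≤ 1)]
      exact hMint
    refine Integrable.mono hMint' hf0meas.aestronglyMeasurable ?_
    filter_upwards [self_mem_ae_restrict measurableSet_Ioc] with u hu
    have hu' : u ∈ Icc (-1:ℝ) 1 := Ioc_subset_Icc_self hu
    have h0 : (0:ℝ) ≤ (1 - u ^ 2) ^ a * Real.exp (-z * u) := by
      apply mul_nonneg _ (Real.exp_pos _).le
      apply Real.rpow_nonneg
      nlinarith [hu'.1, hu'.2]
    have h1 : (1 - u ^ 2) ^ a * Real.exp (-z * u) ≤ M u := hMbd u hu'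
    rw [Real.norm_eq_abs, Real.norm_eq_abs, abs_of_nonneg h0, abs_of_nonneg (le_trans h0 h1)]
    exact h1
  -- put it together
  have step1 : ∫ u in (-1:ℝ)..1, (1 - u ^ 2) ^ a * Real.exp (-z * u)
      ≤ ∫ u in (-1:ℝ)..1, M u :=
    intervalIntegral.integral_mono_on (by norm_num) hf0int hMint hMbd
  have step2 : ∫ u in (-1:ℝ)..1, M u
      = 2 ^ (max a 0) * (2 * ∫ u in (-1:ℝ)..1, g u) := by
    simp only [hMdef]
    rw [intervalIntegral.integral_const_mul, intervalIntegral.integral_add hgint hhint, hrefl]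
    ring
  have h2a : 0 ≤ (2:ℝ) ^ (max a 0) := Real.rpow_nonneg (by norm_num) _
  have step3 : 2 ^ (max a 0) * (2 * ∫ u in (-1:ℝ)..1, g u)
      ≤ 2 ^ (max a 0 + 1) * Real.exp z * ((1 / z) ^ (a + 1) * Real.Gamma (a + 1)) := by
    have e2 : (2:ℝ) ^ (max a 0 + 1) = 2 ^ (max a 0) * 2 := by
      rw [Real.rpow_add (by norm_num : (0:ℝ) < 2), Real.rpow_one]
    rw [e2]
    calc 2 ^ (max a 0) * (2 * ∫ u in (-1:ℝ)..1, g u)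
        ≤ 2 ^ (max a 0) * (2 * (Real.exp z * ((1 / z) ^ (a + 1) * Real.Gamma (a + 1)))) := by
          apply mul_le_mul_of_nonneg_left _ h2a
          linarith
      _ = 2 ^ (max a 0) * 2 * Real.exp z * ((1 / z) ^ (a + 1) * Real.Gamma (a + 1)) := by ring
  linarith [step1, step2 ▸ step1]

/-- Modified Bessel function of the first kind, via its integral representation
`I_ν(z) = (z/2)^ν / (Γ(ν+1/2)√π) ∫_{-1}^1 (1-u²)^{ν-1/2} e^{-zu} du`. -/
noncomputable def besselI (ν z : ℝ) : ℝ :=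
  (z / 2) ^ ν / (Real.Gamma (ν + 1 / 2) * Real.sqrt π) *
    ∫ u in (-1 : ℝ)..1, (1 - u ^ 2) ^ (ν - 1 / 2) * Real.exp (-z * u)

theorem besselI_upper_bound :
    ∃ c : ℝ, 0 < c ∧ ∀ ν z : ℝ, 0 < ν → 0 < z →
      besselI ν z ≤ c * z ^ (-(1 : ℝ) / 2) * Real.exp z := by
  refine ⟨2, by norm_num, fun ν z hν hz => ?_⟩
  set m : ℝ := max (ν - 1/2) 0 with hm
  have hJ := aux_int (ν - 1/2) z (by linarith) hz
  have hhalf : ν - 1/2 + 1 = ν + 1/2 := by ring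
  rw [hhalf] at hJ
  set G : ℝ := Real.Gamma (ν + 1/2) with hG
  have hGpos : 0 < G := Real.Gamma_pos_of_pos (by linarith)
  have hSpos : 0 < Real.sqrt π := Real.sqrt_pos.mpr Real.pi_pos
  have hS1 : 1 ≤ Real.sqrt π := by
    rw [show (1:ℝ) = Real.sqrt 1 from (Real.sqrt_one).symm]
    exact Real.sqrt_le_sqrt (by linarith [Real.pi_gt_three])
  have hCpos : 0 ≤ (z / 2) ^ ν / (G * Real.sqrt π) := by positivity
  have hbound : besselI ν z ≤ (z / 2) ^ ν / (G * Real.sqrt π) *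
      (2 ^ (m + 1) * Real.exp z * ((1 / z) ^ (ν + 1/2) * G)) := by
    rw [besselI]
    exact mul_le_mul_of_nonneg_left hJ hCpos
  -- simplify the right-hand side
  have e1 : (z / 2) ^ ν = z ^ ν / 2 ^ ν := Real.div_rpow hz.le (by norm_num : (0:ℝ) ≤ 2) ν
  have e2 : (1 / z) ^ (ν + 1/2) = (z ^ (ν + 1/2))⁻¹ := by
    rw [one_div, Real.inv_rpow hz.le]
  have ez : z ^ (ν + 1/2) * z ^ (-(1:ℝ)/2) = z ^ ν := by
    rw [← Real.rpow_add hz]; norm_num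
  have hzw : (0:ℝ) < z ^ (ν + 1/2) := Real.rpow_pos_of_pos hz _
  have h2ν : (0:ℝ) < 2 ^ ν := Real.rpow_pos_of_pos (by norm_num) ν
  have h2m : (0:ℝ) < 2 ^ (m + 1) := Real.rpow_pos_of_pos (by norm_num) _
  have hCB : (z / 2) ^ ν / (G * Real.sqrt π) *
      (2 ^ (m + 1) * Real.exp z * ((1 / z) ^ (ν + 1/2) * G))
      = (2 ^ (m + 1) / 2 ^ ν / Real.sqrt π) * (z ^ (-(1:ℝ)/2) * Real.exp z) := by
    rw [e1, e2, ← ez]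
    field_simp
  have e4 : (2:ℝ) ^ (m + 1) / (2:ℝ) ^ ν ≤ 2 := by
    rw [← Real.rpow_sub (by norm_num : (0:ℝ) < 2)]
    calc (2:ℝ) ^ (m + 1 - ν) ≤ (2:ℝ) ^ (1:ℝ) := by
          apply Real.rpow_le_rpow_of_exponent_le one_le_two
          have : m ≤ ν := max_le (by linarith) hν.le
          linarith
      _ = 2 := Real.rpow_one 2
  have e5 : (2:ℝ) ^ (m + 1) / (2:ℝ) ^ ν / Real.sqrt π ≤ 2 := by
    calc (2:ℝ) ^ (m + 1) / (2:ℝ) ^ ν / Real.sqrt π ≤ (2:ℝ) ^ (m + 1) / (2:ℝ) ^ ν :=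
          div_le_self (by positivity) hS1
      _ ≤ 2 := e4
  calc besselI ν z ≤ _ := hbound
    _ = (2 ^ (m + 1) / 2 ^ ν / Real.sqrt π) * (z ^ (-(1:ℝ)/2) * Real.exp z) := hCB
    _ ≤ 2 * (z ^ (-(1:ℝ)/2) * Real.exp z) := by
        apply mul_le_mul_of_nonneg_right e5
        positivity
    _ = 2 * z ^ (-(1:ℝ)/2) * Real.exp z := by ring
end

section
/- Fix q ≥ 2 an integer and set γ = 2√q/(q+1). The function p(u) = √(1+γ²u²) − u + log u − log(1 + √(1+γ²u²)) on (0,∞) attains its global maximum at u₀ = (q+1)/(q−1), and p(u₀) = −log(γ√q) = −log(2q/(q+1)). -/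
open Real

theorem max_of_bessel_phase (q : ℕ) (hq : 2 ≤ q) :
    let γ : ℝ := 2 * Real.sqrt (q : ℝ) / ((q : ℝ) + 1)
    let p : ℝ → ℝ := fun u =>
      Real.sqrt (1 + γ ^ 2 * u ^ 2) - u + Real.log u -
        Real.log (1 + Real.sqrt (1 + γ ^ 2 * u ^ 2))
    let u₀ : ℝ := ((q : ℝ) + 1) / ((q : ℝ) - 1)
    (∀ u : ℝ, 0 < u → p u ≤ p u₀) ∧
      p u₀ = -Real.log (γ * Real.sqrt (q : ℝ)) ∧
      p u₀ = -Real.log (2 * (q : ℝ) / ((q : ℝ) + 1)) := by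
  intro γ p u₀
  have hQ : (2:ℝ) ≤ (q:ℝ) := by exact_mod_cast hq
  have hQ1 : (0:ℝ) < (q:ℝ) - 1 := by linarith
  have hQ2 : (0:ℝ) < (q:ℝ) + 1 := by linarith
  have hQ0 : (0:ℝ) < (q:ℝ) := by linarith
  have hu₀1 : (1:ℝ) < u₀ := by
    rw [show u₀ = ((q:ℝ)+1)/((q:ℝ)-1) from rfl, lt_div_iff₀ hQ1]; linarith
  have hu₀0 : 0 < u₀ := by linarith
  have hγ2 : γ^2 = 4*(q:ℝ)/((q:ℝ)+1)^2 := by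
    show (2 * Real.sqrt (q:ℝ) / ((q:ℝ) + 1))^2 = _
    rw [div_pow, mul_pow, sq_sqrt hQ0.le]
    ring
  have hγpos : 0 < γ := by
    have h := Real.sqrt_pos.mpr hQ0
    show 0 < 2 * Real.sqrt (q:ℝ) / ((q:ℝ) + 1)
    positivity
  -- key algebraic identity
  have hkey : (1 - γ^2) * u₀^2 = 1 := by
    rw [hγ2, show u₀ = ((q:ℝ)+1)/((q:ℝ)-1) from rfl]
    field_simp
    ring
  -- the derivative of p
  have hd : ∀ u : ℝ, 0 < u →
      HasDerivAt p ((Real.sqrt (1 + γ^2*u^2) - u) / u) u := by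
    intro u hu
    set s := Real.sqrt (1 + γ^2*u^2) with hsdef
    have hA : (0:ℝ) < 1 + γ^2*u^2 := by positivity
    have hs0 : 0 < s := Real.sqrt_pos.mpr hA
    have hs2 : s^2 = 1 + γ^2*u^2 := Real.sq_sqrt hA.le
    have h1 : HasDerivAt (fun u : ℝ => 1 + γ^2*u^2) (γ^2 * (2*u)) u := by
      have := ((hasDerivAt_pow 2 u).const_mul (γ^2)).const_add 1
      simpa using this
    have hsd : HasDerivAt (fun u : ℝ => Real.sqrt (1 + γ^2*u^2))
        (γ^2 * (2*u) / (2 * s)) u := h1.sqrt hA.ne'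
    have hl2 : HasDerivAt (fun u : ℝ => Real.log (1 + Real.sqrt (1 + γ^2*u^2)))
        ((γ^2 * (2*u) / (2 * s)) / (1 + s)) u := by
      have := (hsd.const_add 1).log (by positivity)
      simpa using this
    have hfull := ((hsd.sub (hasDerivAt_id u)).add (Real.hasDerivAt_log hu.ne')).sub hl2
    refine HasDerivAt.congr_deriv hfull ?_
    symm
    have h : γ^2*u^2 = s^2 - 1 := by linarith
    field_simp
    linear_combination (-s) * h
  -- sign of √(1+γ²u²) - u
  have h1γ : 0 < 1 - γ^2 := by nlinarith [hkey, mul_pos hu₀0 hu₀0]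
  have hsign_pos : ∀ u : ℝ, 0 < u → u < u₀ → u < Real.sqrt (1 + γ^2*u^2) := by
    intro u hu hlt
    have hA : (0:ℝ) < 1 + γ^2*u^2 := by positivity
    have hs2 : (Real.sqrt (1 + γ^2*u^2))^2 = 1 + γ^2*u^2 := Real.sq_sqrt hA.le
    have h1 : u^2 < u₀^2 := by nlinarith
    have h2 : u^2 < (Real.sqrt (1 + γ^2*u^2))^2 := by
      rw [hs2]; nlinarith [hkey, mul_pos h1γ (sub_pos.mpr h1)]
    exact lt_of_pow_lt_pow_left₀ 2 (Real.sqrt_nonneg _) h2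
  have hsign_neg : ∀ u : ℝ, u₀ < u → Real.sqrt (1 + γ^2*u^2) < u := by
    intro u hlt
    have hu : 0 < u := lt_trans hu₀0 hlt
    have hA : (0:ℝ) < 1 + γ^2*u^2 := by positivity
    have hs2 : (Real.sqrt (1 + γ^2*u^2))^2 = 1 + γ^2*u^2 := Real.sq_sqrt hA.le
    have h1 : u₀^2 < u^2 := by nlinarith
    have h2 : (Real.sqrt (1 + γ^2*u^2))^2 < u^2 := by
      rw [hs2]; nlinarith [hkey, mul_pos h1γ (sub_pos.mpr h1)]
    exact lt_of_pow_lt_pow_left₀ 2 hu.le h2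
  -- monotone on (0, u₀]
  have hmono : StrictMonoOn p (Set.Ioc 0 u₀) := by
    apply strictMonoOn_of_deriv_pos (convex_Ioc 0 u₀)
    · intro x hx
      exact ((hd x hx.1).continuousAt).continuousWithinAt
    · intro x hx
      rw [interior_Ioc] at hx
      rw [(hd x hx.1).deriv]
      exact div_pos (by linarith [hsign_pos x hx.1 hx.2]) hx.1
  have hanti : StrictAntiOn p (Set.Ici u₀) := by
    apply strictAntiOn_of_deriv_neg (convex_Ici u₀)
    · intro x hx
      exact ((hd x (lt_of_lt_of_le hu₀0 hx)).continuousAt).continuousWithinAt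
    · intro x hx
      rw [interior_Ici] at hx
      have hx0 : 0 < x := lt_trans hu₀0 hx
      rw [(hd x hx0).deriv]
      exact div_neg_of_neg_of_pos (by linarith [hsign_neg x hx]) hx0
  -- value at u₀
  have hs_u₀ : Real.sqrt (1 + γ^2*u₀^2) = u₀ := by
    have : 1 + γ^2*u₀^2 = u₀^2 := by nlinarith [hkey]
    rw [this, Real.sqrt_sq hu₀0.le]
  have hval : p u₀ = Real.log u₀ - Real.log (1 + u₀) := by
    show Real.sqrt (1 + γ^2*u₀^2) - u₀ + Real.log u₀ - Real.log (1 + Real.sqrt (1 + γ^2*u₀^2)) = _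
    rw [hs_u₀]; ring
  have hratio : (1 + u₀) / u₀ = 2*(q:ℝ)/((q:ℝ)+1) := by
    rw [show u₀ = ((q:ℝ)+1)/((q:ℝ)-1) from rfl]
    field_simp
    ring
  have hval2 : p u₀ = -Real.log (2*(q:ℝ)/((q:ℝ)+1)) := by
    rw [hval, ← hratio, Real.log_div (by positivity) hu₀0.ne']
    ring
  refine ⟨?_, ?_, hval2⟩
  · intro u hu
    rcases lt_trichotomy u u₀ with h | h | h
    · exact le_of_lt (hmono ⟨hu, h.le⟩ ⟨hu₀0, le_refl u₀⟩ h)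
    · rw [h]
    · exact le_of_lt (hanti (le_refl u₀) h.le h)
  · have : γ * Real.sqrt (q:ℝ) = 2*(q:ℝ)/((q:ℝ)+1) := by
      show 2 * Real.sqrt (q:ℝ) / ((q:ℝ) + 1) * Real.sqrt (q:ℝ) = _
      rw [div_mul_eq_mul_div, mul_assoc, Real.mul_self_sqrt hQ0.le]
    rw [this]
    exact hval2
end
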